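/- Let E be a directed graph. For v ∈ E⁰ write μ_{0,v} := v and, for i ≥ 1, μ_{i,v} := f_{i,v} f_{i−1,v} ⋯ f_{1,v} in SE. Then ∂(SE) = {μ_{i,s(x)} x : x ∈ ∂E, i ∈ ℕ}, every element of ∂(SE) has a unique such representation, and the map μ_{i,s(x)} x ↦ (x, i) is a homeomorphism from ∂(SE) onto ∂E × ℕ, where ℕ carries the discrete topology. -/

import Mathlib

universe u v w

/-- An (algebraic) groupoid structure on a type `G` of arrows.  The multiplication is a total
function, but all axioms involving `mul a b` are only imposed when `a` and `b` are composable,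
i.e. when `src a = rng b`.  Units are the common values of `src` and `rng`. -/
structure GroupoidStruct (G : Type u) where
  src : G → G
  rng : G → G
  mul : G → G → G
  inv : G → G
  src_src : ∀ a, src (src a) = src a
  rng_src : ∀ a, rng (src a) = src a
  src_rng : ∀ a, src (rng a) = rng a
  rng_rng : ∀ a, rng (rng a) = rng a
  mul_assoc : ∀ a b c, src a = rng b → src b = rng c → mul (mul a b) c = mul a (mul b c)
  src_mul : ∀ a b, src a = rng b → src (mul a b) = src b
  rng_mul : ∀ a b, src a = rng b → rng (mul a b) = rng a
  mul_src : ∀ a, mul a (src a) = a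
  rng_mul_self : ∀ a, mul (rng a) a = a
  src_inv : ∀ a, src (inv a) = rng a
  rng_inv : ∀ a, rng (inv a) = src a
  mul_inv : ∀ a, mul a (inv a) = rng a
  inv_mul : ∀ a, mul (inv a) a = src a

namespace GroupoidStruct

variable {G : Type u} {H : Type v}

/-- The unit space `G⁰` of a groupoid. -/
def units (S : GroupoidStruct G) : Set G := {x | S.src x = x ∧ S.rng x = x}

/-- The range map, viewed as a map `G → G⁰`. -/
def rngMap (S : GroupoidStruct G) (g : G) : S.units := ⟨S.rng g, S.src_rng g, S.rng_rng g⟩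

/-- The source map, viewed as a map `G → G⁰`. -/
def srcMap (S : GroupoidStruct G) (g : G) : S.units := ⟨S.src g, S.src_src g, S.rng_src g⟩

/-- A topological groupoid: inversion is continuous and multiplication is continuous on the
set of composable pairs. -/
structure IsTopologicalGroupoid [TopologicalSpace G] (S : GroupoidStruct G) : Prop where
  continuous_inv : Continuous S.inv
  continuousOn_mul :
    ContinuousOn (fun p : G × G => S.mul p.1 p.2) {p : G × G | S.src p.1 = S.rng p.2}

/-- An ample groupoid: a topological groupoid whose topology has a basis of compact open sets,
whose unit space is Hausdorff, and whose range and source maps are local homeomorphisms onto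
the unit space. -/
structure IsAmple [TopologicalSpace G] (S : GroupoidStruct G)
    extends IsTopologicalGroupoid S : Prop where
  compact_open_basis : ∃ B : Set (Set G),
    (∀ U ∈ B, IsCompact U ∧ IsOpen U) ∧ TopologicalSpace.IsTopologicalBasis B
  t2_units : T2Space S.units
  isLocalHomeomorph_rngMap : IsLocalHomeomorph S.rngMap
  isLocalHomeomorph_srcMap : IsLocalHomeomorph S.srcMap

/-- `K ⊆ G⁰` is `G`-full if `r(GK) = G⁰`, where `GK = s⁻¹(K)`. -/
def IsFull (S : GroupoidStruct G) (K : Set G) : Prop := S.rng '' (S.src ⁻¹' K) = S.units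

/-- `K` is an open subset of the unit space (in the subspace topology of `G⁰`). -/
def IsUnitOpen [TopologicalSpace G] (S : GroupoidStruct G) (K : Set G) : Prop :=
  K ⊆ S.units ∧ IsOpen {x : S.units | (x : G) ∈ K}

/-- `K` is a clopen subset of the unit space (in the subspace topology of `G⁰`). -/
def IsUnitClopen [TopologicalSpace G] (S : GroupoidStruct G) (K : Set G) : Prop :=
  K ⊆ S.units ∧ IsClopen {x : S.units | (x : G) ∈ K}

/-- `K` is a compact open subset of the unit space. -/
def IsUnitCompactOpen [TopologicalSpace G] (S : GroupoidStruct G) (K : Set G) : Prop :=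
  K ⊆ S.units ∧ IsCompact K ∧ IsOpen {x : S.units | (x : G) ∈ K}

/-- An open bisection: an open set on which both the range and the source map restrict to
homeomorphisms onto their images (i.e. are topological embeddings). -/
def IsOpenBisection [TopologicalSpace G] (S : GroupoidStruct G) (U : Set G) : Prop :=
  IsOpen U ∧ Topology.IsEmbedding (U.restrict S.rng) ∧ Topology.IsEmbedding (U.restrict S.src)

/-- A compact open bisection. -/
def IsCompactOpenBisection [TopologicalSpace G] (S : GroupoidStruct G) (U : Set G) : Prop :=
  IsCompact U ∧ S.IsOpenBisection U

/-- The product of two groupoids, with coordinatewise operations. -/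
def prod (S : GroupoidStruct G) (T : GroupoidStruct H) : GroupoidStruct (G × H) where
  src p := (S.src p.1, T.src p.2)
  rng p := (S.rng p.1, T.rng p.2)
  mul p q := (S.mul p.1 q.1, T.mul p.2 q.2)
  inv p := (S.inv p.1, T.inv p.2)
  src_src a := Prod.ext_iff.mpr ⟨S.src_src _, T.src_src _⟩
  rng_src a := Prod.ext_iff.mpr ⟨S.rng_src _, T.rng_src _⟩
  src_rng a := Prod.ext_iff.mpr ⟨S.src_rng _, T.src_rng _⟩
  rng_rng a := Prod.ext_iff.mpr ⟨S.rng_rng _, T.rng_rng _⟩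
  mul_assoc a b c h1 h2 := by
    obtain ⟨h1a, h1b⟩ := Prod.ext_iff.mp h1
    obtain ⟨h2a, h2b⟩ := Prod.ext_iff.mp h2
    exact Prod.ext_iff.mpr ⟨S.mul_assoc _ _ _ h1a h2a, T.mul_assoc _ _ _ h1b h2b⟩
  src_mul a b h := by
    obtain ⟨ha, hb⟩ := Prod.ext_iff.mp h
    exact Prod.ext_iff.mpr ⟨S.src_mul _ _ ha, T.src_mul _ _ hb⟩
  rng_mul a b h := by
    obtain ⟨ha, hb⟩ := Prod.ext_iff.mp h
    exact Prod.ext_iff.mpr ⟨S.rng_mul _ _ ha, T.rng_mul _ _ hb⟩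
  mul_src a := Prod.ext_iff.mpr ⟨S.mul_src _, T.mul_src _⟩
  rng_mul_self a := Prod.ext_iff.mpr ⟨S.rng_mul_self _, T.rng_mul_self _⟩
  src_inv a := Prod.ext_iff.mpr ⟨S.src_inv _, T.src_inv _⟩
  rng_inv a := Prod.ext_iff.mpr ⟨S.rng_inv _, T.rng_inv _⟩
  mul_inv a := Prod.ext_iff.mpr ⟨S.mul_inv _, T.mul_inv _⟩
  inv_mul a := Prod.ext_iff.mpr ⟨S.inv_mul _, T.inv_mul _⟩

/-- The full equivalence relation `ℛ = ℕ × ℕ`, regarded as a (discrete, principal) groupoid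
with unit space `ℕ`. -/
def Rho : GroupoidStruct (ℕ × ℕ) where
  src p := (p.2, p.2)
  rng p := (p.1, p.1)
  mul p q := (p.1, q.2)
  inv p := (p.2, p.1)
  src_src _ := rfl
  rng_src _ := rfl
  src_rng _ := rfl
  rng_rng _ := rfl
  mul_assoc _ _ _ _ _ := rfl
  src_mul _ _ _ := rfl
  rng_mul _ _ _ := rfl
  mul_src _ := rfl
  rng_mul_self _ := rfl
  src_inv _ := rfl
  rng_inv _ := rfl
  mul_inv _ := rfl
  inv_mul _ := rfl

/-- An isomorphism of topological groupoids: a homeomorphism of the arrow spaces respecting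
all the groupoid operations. -/
structure GroupoidIso [TopologicalSpace G] [TopologicalSpace H]
    (S : GroupoidStruct G) (T : GroupoidStruct H) extends G ≃ₜ H where
  map_mul : ∀ a b, S.src a = S.rng b →
    toHomeomorph (S.mul a b) = T.mul (toHomeomorph a) (toHomeomorph b)
  map_inv : ∀ a, toHomeomorph (S.inv a) = T.inv (toHomeomorph a)
  map_src : ∀ a, toHomeomorph (S.src a) = T.src (toHomeomorph a)
  map_rng : ∀ a, toHomeomorph (S.rng a) = T.rng (toHomeomorph a)

/-- The arrow space `G|_K = r⁻¹(K) ∩ s⁻¹(K)` of the restriction of `G` to `K ⊆ G⁰`,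
with the subspace topology. -/
abbrev Restrict (S : GroupoidStruct G) (K : Set G) : Type u :=
  {g : G // S.rng g ∈ K ∧ S.src g ∈ K}

variable (S : GroupoidStruct G) (K : Set G)

def rsrc (a : S.Restrict K) : S.Restrict K :=
  ⟨S.src a.1, by rw [S.rng_src]; exact a.2.2, by rw [S.src_src]; exact a.2.2⟩

def rrng (a : S.Restrict K) : S.Restrict K :=
  ⟨S.rng a.1, by rw [S.rng_rng]; exact a.2.1, by rw [S.src_rng]; exact a.2.1⟩

def rinv (a : S.Restrict K) : S.Restrict K :=
  ⟨S.inv a.1, by rw [S.rng_inv]; exact a.2.2, by rw [S.src_inv]; exact a.2.1⟩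

open Classical in
noncomputable def rmul (a b : S.Restrict K) : S.Restrict K :=
  if h : S.src a.1 = S.rng b.1 then
    ⟨S.mul a.1 b.1, by rw [S.rng_mul _ _ h]; exact a.2.1, by rw [S.src_mul _ _ h]; exact b.2.2⟩
  else a

@[simp] lemma rsrc_val (a : S.Restrict K) : (S.rsrc K a).1 = S.src a.1 := rfl
@[simp] lemma rrng_val (a : S.Restrict K) : (S.rrng K a).1 = S.rng a.1 := rfl
@[simp] lemma rinv_val (a : S.Restrict K) : (S.rinv K a).1 = S.inv a.1 := rfl

lemma rmul_val (a b : S.Restrict K) (h : S.src a.1 = S.rng b.1) :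
    (S.rmul K a b).1 = S.mul a.1 b.1 := by
  unfold rmul
  rw [dif_pos h]

/-- The restriction `G|_K` of a groupoid to a subset `K` of its unit space. -/
noncomputable def restrict : GroupoidStruct (S.Restrict K) where
  src := S.rsrc K
  rng := S.rrng K
  mul := S.rmul K
  inv := S.rinv K
  src_src a := Subtype.ext (S.src_src a.1)
  rng_src a := Subtype.ext (S.rng_src a.1)
  src_rng a := Subtype.ext (S.src_rng a.1)
  rng_rng a := Subtype.ext (S.rng_rng a.1)
  mul_assoc a b c h1 h2 := by
    have h1' : S.src a.1 = S.rng b.1 := congrArg Subtype.val h1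
    have h2' : S.src b.1 = S.rng c.1 := congrArg Subtype.val h2
    have hab := S.rmul_val K a b h1'
    have hbc := S.rmul_val K b c h2'
    apply Subtype.ext
    calc (S.rmul K (S.rmul K a b) c).1
        = S.mul (S.rmul K a b).1 c.1 :=
          S.rmul_val K _ _ (by rw [hab, S.src_mul _ _ h1']; exact h2')
      _ = S.mul (S.mul a.1 b.1) c.1 := by rw [hab]
      _ = S.mul a.1 (S.mul b.1 c.1) := S.mul_assoc _ _ _ h1' h2'
      _ = S.mul a.1 (S.rmul K b c).1 := by rw [hbc]
      _ = (S.rmul K a (S.rmul K b c)).1 :=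
          (S.rmul_val K _ _ (by rw [hbc, S.rng_mul _ _ h2']; exact h1')).symm
  src_mul a b h := by
    have h' : S.src a.1 = S.rng b.1 := congrArg Subtype.val h
    apply Subtype.ext
    show S.src (S.rmul K a b).1 = S.src b.1
    rw [S.rmul_val K a b h', S.src_mul _ _ h']
  rng_mul a b h := by
    have h' : S.src a.1 = S.rng b.1 := congrArg Subtype.val h
    apply Subtype.ext
    show S.rng (S.rmul K a b).1 = S.rng a.1
    rw [S.rmul_val K a b h', S.rng_mul _ _ h']
  mul_src a := by
    apply Subtype.ext
    rw [S.rmul_val K a _ (by rw [rsrc_val, S.rng_src]), rsrc_val]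
    exact S.mul_src a.1
  rng_mul_self a := by
    apply Subtype.ext
    rw [S.rmul_val K _ a (by rw [rrng_val, S.src_rng]), rrng_val]
    exact S.rng_mul_self a.1
  src_inv a := Subtype.ext (S.src_inv a.1)
  rng_inv a := Subtype.ext (S.rng_inv a.1)
  mul_inv a := by
    apply Subtype.ext
    rw [S.rmul_val K a _ (by rw [rinv_val, S.rng_inv]), rinv_val]
    exact S.mul_inv a.1
  inv_mul a := by
    apply Subtype.ext
    rw [S.rmul_val K _ a (by rw [rinv_val, S.src_inv]), rinv_val]
    exact S.inv_mul a.1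

variable {S K}

/-- The data of a groupoid equivalence between `G` and `H`: a space `Z` carrying commuting
free and proper continuous actions of `G` (on the left) and `H` (on the right), whose anchor
maps `ρ : Z → G⁰` and `σ : Z → H⁰` induce homeomorphisms `Z/H ≅ G⁰` and `G\Z ≅ H⁰`.
The latter conditions are encoded by requiring that the fibres of `ρ` are exactly the
`H`-orbits, that `ρ` is surjective onto `G⁰`, and that `ρ` is a topological quotient map onto
`G⁰` (and symmetrically for `σ`): this says precisely that the induced map `Z/H → G⁰` is a
homeomorphism. -/
structure GroupoidEquivalenceData [TopologicalSpace G] [TopologicalSpace H]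
    (S : GroupoidStruct G) (T : GroupoidStruct H) (Z : Type w) [TopologicalSpace Z] where
  ρ : Z → G
  σ : Z → H
  ρ_unit : ∀ z, ρ z ∈ S.units
  σ_unit : ∀ z, σ z ∈ T.units
  continuous_ρ : Continuous ρ
  continuous_σ : Continuous σ
  actL : G → Z → Z
  actR : Z → H → Z
  ρ_actL : ∀ g z, S.src g = ρ z → ρ (actL g z) = S.rng g
  σ_actL : ∀ g z, S.src g = ρ z → σ (actL g z) = σ z
  actL_unit : ∀ z, actL (ρ z) z = z
  actL_mul : ∀ g g' z, S.src g = S.rng g' → S.src g' = ρ z →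
    actL (S.mul g g') z = actL g (actL g' z)
  σ_actR : ∀ z h, σ z = T.rng h → σ (actR z h) = T.src h
  ρ_actR : ∀ z h, σ z = T.rng h → ρ (actR z h) = ρ z
  actR_unit : ∀ z, actR z (σ z) = z
  actR_mul : ∀ z h h', σ z = T.rng h → T.src h = T.rng h' →
    actR (actR z h) h' = actR z (T.mul h h')
  act_comm : ∀ g z h, S.src g = ρ z → σ z = T.rng h →
    actL g (actR z h) = actR (actL g z) h
  continuousOn_actL :
    ContinuousOn (fun p : G × Z => actL p.1 p.2) {p : G × Z | S.src p.1 = ρ p.2}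
  continuousOn_actR :
    ContinuousOn (fun p : Z × H => actR p.1 p.2) {p : Z × H | σ p.1 = T.rng p.2}
  free_actL : ∀ g z, S.src g = ρ z → actL g z = z → g = ρ z
  free_actR : ∀ z h, σ z = T.rng h → actR z h = z → h = σ z
  proper_actL : IsProperMap (fun p : {q : G × Z // S.src q.1 = ρ q.2} =>
    ((actL p.1.1 p.1.2, p.1.2) : Z × Z))
  proper_actR : IsProperMap (fun p : {q : Z × H // σ q.1 = T.rng q.2} =>
    ((actR p.1.1 p.1.2, p.1.1) : Z × Z))
  ρ_fiber_orbit : ∀ z z', ρ z = ρ z' ↔ ∃ h, σ z = T.rng h ∧ z' = actR z h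
  σ_fiber_orbit : ∀ z z', σ z = σ z' ↔ ∃ g, S.src g = ρ z ∧ z' = actL g z
  ρ_surj : Set.range ρ = S.units
  σ_surj : Set.range σ = T.units
  quotient_ρ : Topology.IsQuotientMap (fun z => (⟨ρ z, ρ_unit z⟩ : S.units))
  quotient_σ : Topology.IsQuotientMap (fun z => (⟨σ z, σ_unit z⟩ : T.units))

/-- `G` and `H` are groupoid equivalent if there exists a `G`–`H` equivalence. -/
def GroupoidEquivalent [TopologicalSpace G] [TopologicalSpace H]
    (S : GroupoidStruct G) (T : GroupoidStruct H) : Prop :=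
  ∃ (Z : Type (max u v)) (_ : TopologicalSpace Z), Nonempty (GroupoidEquivalenceData S T Z)

/-- Kakutani equivalence of ample groupoids: there are full clopen subsets `X ⊆ G⁰`, `Y ⊆ H⁰`
with `G|_X ≅ H|_Y`. -/
def KakutaniEquivalent [TopologicalSpace G] [TopologicalSpace H]
    (S : GroupoidStruct G) (T : GroupoidStruct H) : Prop :=
  ∃ (X : Set G) (Y : Set H), S.IsUnitClopen X ∧ S.IsFull X ∧ T.IsUnitClopen Y ∧ T.IsFull Y ∧
    Nonempty (GroupoidIso (S.restrict X) (T.restrict Y))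

end GroupoidStruct
/-! ### Directed graphs, boundary path spaces and graph groupoids -/

/-- A directed graph: vertices, edges, and source/range maps.  We use the convention that a
path `e₁e₂⋯eₙ` satisfies `r(eᵢ) = s(eᵢ₊₁)`. -/
structure DirGraph : Type (u + 1) where
  V : Type u
  E : Type u
  s : E → V
  r : E → V

namespace DirGraph

/-- `IsPathList Γ v l w`: the list of edges `l` forms a path from `v` to `w`. -/
inductive IsPathList (Γ : DirGraph) : Γ.V → List Γ.E → Γ.V → Prop
  | nil (v : Γ.V) : IsPathList Γ v [] v
  | cons {v w : Γ.V} (e : Γ.E) {l : List Γ.E} (hv : Γ.s e = v)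
      (h : IsPathList Γ (Γ.r e) l w) : IsPathList Γ v (e :: l) w

lemma isPathList_cons_tail {Γ : DirGraph} {v w : Γ.V} {e : Γ.E} {l : List Γ.E}
    (h : Γ.IsPathList v (e :: l) w) : Γ.IsPathList (Γ.r e) l w := by
  cases h; assumption

/-- A finite path in a directed graph. -/
structure FinPath (Γ : DirGraph) where
  src : Γ.V
  edges : List Γ.E
  rng : Γ.V
  isPath : Γ.IsPathList src edges rng

/-- An infinite path in a directed graph. -/
structure InfPath (Γ : DirGraph) where
  edges : ℕ → Γ.E
  compat : ∀ n, Γ.r (edges n) = Γ.s (edges (n + 1))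

/-- A sink: a vertex emitting no edges. -/
def IsSink (Γ : DirGraph) (v : Γ.V) : Prop := ∀ e, Γ.s e ≠ v

/-- An infinite emitter: a vertex emitting infinitely many edges. -/
def IsInfiniteEmitter (Γ : DirGraph) (v : Γ.V) : Prop := {e | Γ.s e = v}.Infinite

def IsBoundaryVertex (Γ : DirGraph) (v : Γ.V) : Prop :=
  Γ.IsSink v ∨ Γ.IsInfiniteEmitter v

/-- The boundary path space `∂E`: all infinite paths together with all finite paths whose
range is a sink or an infinite emitter. -/
inductive BPath (Γ : DirGraph) : Type u
  | fin (p : Γ.FinPath) (hb : Γ.IsBoundaryVertex p.rng) : BPath Γ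
  | inf (x : Γ.InfPath) : BPath Γ

variable {Γ : DirGraph}

namespace BPath

/-- The source (initial vertex) of a boundary path. -/
def src : Γ.BPath → Γ.V
  | .fin p _ => p.src
  | .inf x => Γ.s (x.edges 0)

/-- The length of a boundary path, in `ℕ∞`. -/
def length : Γ.BPath → ℕ∞
  | .fin p _ => (p.edges.length : ℕ∞)
  | .inf _ => ⊤

/-- The `n`-th edge of a boundary path, if defined. -/
def edge? : Γ.BPath → ℕ → Option Γ.E
  | .fin p _, n => p.edges[n]?
  | .inf x, n => some (x.edges n)

/-- Remove the first edge of a boundary path (identity on paths of length zero). -/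
def tail : Γ.BPath → Γ.BPath
  | .fin ⟨v, [], w, h⟩ hb => .fin ⟨v, [], w, h⟩ hb
  | .fin ⟨_, e :: l, w, h⟩ hb => .fin ⟨Γ.r e, l, w, isPathList_cons_tail h⟩ hb
  | .inf x => .inf ⟨fun n => x.edges (n + 1), fun n => x.compat (n + 1)⟩

/-- The shift map `σⁿ`, removing the first `n` edges. -/
def shift (n : ℕ) (x : Γ.BPath) : Γ.BPath := tail^[n] x

/-- Prepend an edge to a boundary path. -/
def cons (e : Γ.E) : (x : Γ.BPath) → x.src = Γ.r e → Γ.BPath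
  | .fin p hb, h => .fin ⟨Γ.s e, e :: p.edges, p.rng, .cons e rfl (h ▸ p.isPath)⟩ hb
  | .inf x, h => .inf ⟨fun n => Nat.casesOn n e fun k => x.edges k,
      fun n => by
        cases n with
        | zero => exact h.symm
        | succ k => exact x.compat k⟩

open Classical in
/-- Prepend an edge to a boundary path when composable; otherwise do nothing. -/
noncomputable def consE (e : Γ.E) (x : Γ.BPath) : Γ.BPath :=
  if h : x.src = Γ.r e then x.cons e h else x

/-- Concatenation `μx` of a finite path `μ` with a boundary path `x` (extending by junk when
the paths are not composable). -/
noncomputable def concat (μ : Γ.FinPath) (x : Γ.BPath) : Γ.BPath :=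
  μ.edges.foldr consE x

/-- `x` has the finite path `μ` as an initial segment. -/
def hasPrefix (x : Γ.BPath) (μ : Γ.FinPath) : Prop :=
  x.src = μ.src ∧ ∀ n < μ.edges.length, x.edge? n = μ.edges[n]?

/-- The cylinder set `Z(μ ∖ F)`. -/
def cyl (μ : Γ.FinPath) (F : Finset Γ.E) : Set Γ.BPath :=
  {x | x.hasPrefix μ ∧ ∀ e ∈ F, x.edge? μ.edges.length ≠ some e}

/-- The topology on the boundary path space, generated by the cylinder sets `Z(μ ∖ F)`. -/
instance : TopologicalSpace Γ.BPath :=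
  TopologicalSpace.generateFrom
    {U | ∃ (μ : Γ.FinPath) (F : Finset Γ.E), (∀ e ∈ F, Γ.s e = μ.rng) ∧ U = cyl μ F}

lemma length_tail (x : Γ.BPath) : x.tail.length = x.length - 1 := by
  cases x with
  | fin p hb =>
    cases p with
    | mk v l w hp =>
      cases l with
      | nil => simp [tail, length, zero_tsub]
      | cons e l' =>
        simp only [tail, length, List.length_cons]
        rw [← Nat.cast_one (R := ℕ∞), ← ENat.coe_sub]
        norm_num
  | inf x => simp [tail, length]

lemma length_shift (n : ℕ) (x : Γ.BPath) : (shift n x).length = x.length - n := by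
  induction n generalizing x with
  | zero => simp [shift]
  | succ k ih =>
    have hs : shift (k + 1) x = tail (shift k x) := Function.iterate_succ_apply' tail k x
    rw [hs, length_tail, ih, tsub_tsub]
    norm_cast

lemma shift_shift (m n : ℕ) (x : Γ.BPath) : shift m (shift n x) = shift (n + m) x := by
  simp only [shift, ← Function.iterate_add_apply]
  rw [Nat.add_comm]

end BPath

lemma enat_add_le {a c : ℕ} {t : ℕ∞} (h1 : (a : ℕ∞) ≤ t) (h2 : (c : ℕ∞) ≤ t - a) :
    ((a + c : ℕ) : ℕ∞) ≤ t := by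
  induction t using ENat.recTopCoe with
  | top => exact le_top
  | coe N =>
    rw [← ENat.coe_sub] at h2
    rw [Nat.cast_le] at h1 h2 ⊢
    omega

/-- The arrow space of the graph groupoid `G_E`. -/
def GraphGpd (Γ : DirGraph) : Type u :=
  {t : Γ.BPath × ℤ × Γ.BPath // ∃ m n : ℕ,
    (m : ℤ) - (n : ℤ) = t.2.1 ∧ (m : ℕ∞) ≤ t.1.length ∧ (n : ℕ∞) ≤ t.2.2.length ∧
    BPath.shift m t.1 = BPath.shift n t.2.2}

/-- The vertex path at a vertex `v`. -/
def FinPath.ofVertex (Γ : DirGraph) (v : Γ.V) : Γ.FinPath := ⟨v, [], v, .nil v⟩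

/-- The topology on the graph groupoid, generated by the basic sets `Z(α, β ∖ F)`. -/
instance (Γ : DirGraph) : TopologicalSpace Γ.GraphGpd :=
  TopologicalSpace.generateFrom
    {U | ∃ (α β : Γ.FinPath) (F : Finset Γ.E), α.rng = β.rng ∧ (∀ e ∈ F, Γ.s e = α.rng) ∧
      U = {t : Γ.GraphGpd | ∃ x : Γ.BPath,
        x ∈ BPath.cyl (FinPath.ofVertex Γ α.rng) F ∧
        t.1 = (BPath.concat α x, (α.edges.length : ℤ) - (β.edges.length : ℤ),
          BPath.concat β x)}}

def gsrc (t : Γ.GraphGpd) : Γ.GraphGpd :=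
  ⟨(t.1.2.2, 0, t.1.2.2), 0, 0, by simp, by simp, by simp, rfl⟩

def grng (t : Γ.GraphGpd) : Γ.GraphGpd :=
  ⟨(t.1.1, 0, t.1.1), 0, 0, by simp, by simp, by simp, rfl⟩

def ginv (t : Γ.GraphGpd) : Γ.GraphGpd :=
  ⟨(t.1.2.2, -t.1.2.1, t.1.1), by
    obtain ⟨m, n, he, hl1, hl2, hs⟩ := t.2
    refine ⟨n, m, ?_, hl2, hl1, hs.symm⟩
    show (n : ℤ) - (m : ℤ) = -t.1.2.1
    omega⟩

open Classical in
noncomputable def gmul (t u : Γ.GraphGpd) : Γ.GraphGpd :=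
  if h : t.1.2.2 = u.1.1 then
    ⟨(t.1.1, t.1.2.1 + u.1.2.1, u.1.2.2), by
      obtain ⟨m1, n1, e1, l1, l1', s1⟩ := t.2
      obtain ⟨m2, n2, e2, l2, l2', s2⟩ := u.2
      rw [h] at l1' s1
      have hlen : t.1.1.length - m1 = u.1.1.length - n1 := by
        have := congrArg BPath.length s1
        rwa [BPath.length_shift, BPath.length_shift] at this
      refine ⟨m1 + (m2 - n1), n2 + (n1 - m2), ?_, ?_, ?_, ?_⟩
      · show ((m1 + (m2 - n1) : ℕ) : ℤ) - ((n2 + (n1 - m2) : ℕ) : ℤ) = t.1.2.1 + u.1.2.1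
        omega
      · refine enat_add_le l1 ?_
        rw [hlen, ENat.coe_sub]
        exact tsub_le_tsub_right l2 _
      · refine enat_add_le l2' ?_
        have hlen2 : u.1.1.length - m2 = u.1.2.2.length - n2 := by
          have := congrArg BPath.length s2
          rwa [BPath.length_shift, BPath.length_shift] at this
        rw [← hlen2, ENat.coe_sub]
        exact tsub_le_tsub_right l1' _
      · have key : n1 + (m2 - n1) = m2 + (n1 - m2) := by omega
        calc BPath.shift (m1 + (m2 - n1)) t.1.1
            = BPath.shift (m2 - n1) (BPath.shift m1 t.1.1) := (BPath.shift_shift _ _ _).symm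
          _ = BPath.shift (m2 - n1) (BPath.shift n1 u.1.1) := by rw [s1]
          _ = BPath.shift (n1 + (m2 - n1)) u.1.1 := BPath.shift_shift _ _ _
          _ = BPath.shift (m2 + (n1 - m2)) u.1.1 := by rw [key]
          _ = BPath.shift (n1 - m2) (BPath.shift m2 u.1.1) := (BPath.shift_shift _ _ _).symm
          _ = BPath.shift (n1 - m2) (BPath.shift n2 u.1.2.2) := by rw [s2]
          _ = BPath.shift (n2 + (n1 - m2)) u.1.2.2 := BPath.shift_shift _ _ _⟩
  else t

@[simp] lemma gsrc_val (t : Γ.GraphGpd) : (gsrc t).1 = (t.1.2.2, 0, t.1.2.2) := rfl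
@[simp] lemma grng_val (t : Γ.GraphGpd) : (grng t).1 = (t.1.1, 0, t.1.1) := rfl
@[simp] lemma ginv_val (t : Γ.GraphGpd) : (ginv t).1 = (t.1.2.2, -t.1.2.1, t.1.1) := rfl

lemma gmul_val (t u : Γ.GraphGpd) (h : t.1.2.2 = u.1.1) :
    (gmul t u).1 = (t.1.1, t.1.2.1 + u.1.2.1, u.1.2.2) := by
  unfold gmul
  exact congrArg Subtype.val (dif_pos h)

/-- The graph groupoid `G_E` of a directed graph. -/
noncomputable def graphGpd (Γ : DirGraph) : GroupoidStruct Γ.GraphGpd where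
  src := gsrc
  rng := grng
  mul := gmul
  inv := ginv
  src_src t := Subtype.ext rfl
  rng_src t := Subtype.ext rfl
  src_rng t := Subtype.ext rfl
  rng_rng t := Subtype.ext rfl
  mul_assoc t u v h1 h2 := by
    have h12 : t.1.2.2 = u.1.1 := congrArg (fun w => w.1.1) h1
    have h23 : u.1.2.2 = v.1.1 := congrArg (fun w => w.1.1) h2
    have htu := gmul_val t u h12
    have huv := gmul_val u v h23
    have hA : (gmul t u).1.2.2 = v.1.1 := by rw [htu]; exact h23
    have hB : t.1.2.2 = (gmul u v).1.1 := by rw [huv]; exact h12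
    apply Subtype.ext
    rw [gmul_val _ _ hA, gmul_val _ _ hB, htu, huv]
    simp [add_assoc]
  src_mul t u h := by
    have h' : t.1.2.2 = u.1.1 := congrArg (fun w => w.1.1) h
    apply Subtype.ext
    show ((gmul t u).1.2.2, (0 : ℤ), (gmul t u).1.2.2) = _
    rw [gmul_val _ _ h']
    rfl
  rng_mul t u h := by
    have h' : t.1.2.2 = u.1.1 := congrArg (fun w => w.1.1) h
    apply Subtype.ext
    show ((gmul t u).1.1, (0 : ℤ), (gmul t u).1.1) = _
    rw [gmul_val _ _ h']
    rfl
  mul_src t := by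
    apply Subtype.ext
    rw [gmul_val _ _ rfl]
    simp
  rng_mul_self t := by
    apply Subtype.ext
    rw [gmul_val _ _ rfl]
    simp
  src_inv t := Subtype.ext rfl
  rng_inv t := Subtype.ext rfl
  mul_inv t := by
    apply Subtype.ext
    rw [gmul_val _ _ rfl]
    simp
  inv_mul t := by
    apply Subtype.ext
    rw [gmul_val _ _ rfl]
    simp

/-! ### The stabilised graph `SE` -/

/-- The graph `SE` obtained from `E` by attaching an infinite head `⋯ f₃ f₂ f₁` at every
vertex.  The new vertex `Sum.inr (v, i)` is `vᵢ₊₁`, and the new edge `Sum.inr (v, i)` is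
`fᵢ₊₁,ᵥ`, with source `vᵢ₊₁` and range `vᵢ` (where `v₀ = v`). -/
def stab (Γ : DirGraph.{u}) : DirGraph.{u} where
  V := Γ.V ⊕ (Γ.V × ℕ)
  E := Γ.E ⊕ (Γ.V × ℕ)
  s e := match e with
    | .inl e => .inl (Γ.s e)
    | .inr (v, i) => .inr (v, i)
  r e := match e with
    | .inl e => .inl (Γ.r e)
    | .inr (v, 0) => .inl v
    | .inr (v, i + 1) => .inr (v, i)

@[simp] lemma stab_s_inl (e : Γ.E) : Γ.stab.s (Sum.inl e) = Sum.inl (Γ.s e) := rfl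
@[simp] lemma stab_s_inr (p : Γ.V × ℕ) : Γ.stab.s (Sum.inr p) = Sum.inr p := rfl
@[simp] lemma stab_r_inl (e : Γ.E) : Γ.stab.r (Sum.inl e) = Sum.inl (Γ.r e) := rfl
@[simp] lemma stab_r_inr_zero (v : Γ.V) : Γ.stab.r (Sum.inr (v, 0)) = Sum.inl v := rfl
@[simp] lemma stab_r_inr_succ (v : Γ.V) (i : ℕ) :
    Γ.stab.r (Sum.inr (v, i + 1)) = Sum.inr (v, i) := rfl

/-- The source vertex `vᵢ` of the head path `μ_{i,v}`. -/
def headSrcV (Γ : DirGraph) (v : Γ.V) : ℕ → Γ.stab.V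
  | 0 => .inl v
  | i + 1 => .inr (v, i)

/-- The edges `fᵢ,ᵥ fᵢ₋₁,ᵥ ⋯ f₁,ᵥ` of the head path `μ_{i,v}`. -/
def headEdges (Γ : DirGraph) (v : Γ.V) : ℕ → List Γ.stab.E
  | 0 => []
  | i + 1 => .inr (v, i) :: headEdges Γ v i

lemma headIsPath (Γ : DirGraph) (v : Γ.V) (i : ℕ) :
    Γ.stab.IsPathList (headSrcV Γ v i) (headEdges Γ v i) (Sum.inl v) := by
  induction i with
  | zero => exact .nil _
  | succ k ih =>
    have hr : Γ.stab.r (Sum.inr (v, k)) = headSrcV Γ v k := by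
      cases k <;> rfl
    exact .cons _ rfl (hr ▸ ih)

/-- The head path `μ_{i,v} = f_{i,v} f_{i-1,v} ⋯ f_{1,v}` from `vᵢ` to `v` in `SE`
(`μ_{0,v}` is the vertex path at `v`). -/
def headPath (Γ : DirGraph) (v : Γ.V) (i : ℕ) : Γ.stab.FinPath :=
  ⟨headSrcV Γ v i, headEdges Γ v i, Sum.inl v, headIsPath Γ v i⟩

lemma isPathList_map_inl {v w : Γ.V} {l : List Γ.E} (h : Γ.IsPathList v l w) :
    Γ.stab.IsPathList (Sum.inl v) (l.map Sum.inl) (Sum.inl w) := by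
  induction h with
  | nil v => exact .nil _
  | cons e hv h ih => exact .cons _ (congrArg Sum.inl hv) ih

lemma isSink_stab {v : Γ.V} (h : Γ.IsSink v) : Γ.stab.IsSink (Sum.inl v) := by
  intro e he
  cases e with
  | inl e' => exact h e' (Sum.inl_injective he)
  | inr p => simp at he

lemma isInfiniteEmitter_stab {v : Γ.V} (h : Γ.IsInfiniteEmitter v) :
    Γ.stab.IsInfiniteEmitter (Sum.inl v) := by
  have hsub : Sum.inl '' {e | Γ.s e = v} ⊆ {e' | Γ.stab.s e' = Sum.inl v} := by
    rintro _ ⟨e, he, rfl⟩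
    exact congrArg Sum.inl he
  exact Set.Infinite.mono hsub (h.image Sum.inl_injective.injOn)

lemma isBoundaryVertex_stab {v : Γ.V} (h : Γ.IsBoundaryVertex v) :
    Γ.stab.IsBoundaryVertex (Sum.inl v) :=
  h.elim (fun h => Or.inl (isSink_stab h)) (fun h => Or.inr (isInfiniteEmitter_stab h))

/-- A finite path of `E`, viewed as a finite path of `SE`. -/
def FinPath.toStab (p : Γ.FinPath) : Γ.stab.FinPath :=
  ⟨Sum.inl p.src, p.edges.map Sum.inl, Sum.inl p.rng, isPathList_map_inl p.isPath⟩

/-- An infinite path of `E`, viewed as an infinite path of `SE`. -/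
def InfPath.toStab (x : Γ.InfPath) : Γ.stab.InfPath :=
  ⟨fun n => Sum.inl (x.edges n), fun n => congrArg Sum.inl (x.compat n)⟩

/-- A boundary path of `E`, viewed as a boundary path of `SE`. -/
def BPath.toStab : Γ.BPath → Γ.stab.BPath
  | .fin p hb => .fin p.toStab (isBoundaryVertex_stab hb)
  | .inf x => .inf x.toStab

/-! ### Auxiliary lemmas for the stabilisation theorem -/

section Aux

namespace BPath

lemma src_cons (e : Γ.E) (x : Γ.BPath) (h : x.src = Γ.r e) : (x.cons e h).src = Γ.s e := by
  cases x <;> rfl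

lemma length_cons (e : Γ.E) (x : Γ.BPath) (h : x.src = Γ.r e) :
    (x.cons e h).length = x.length + 1 := by
  cases x with
  | fin p hb =>
    simp only [cons, length, List.length_cons]
    push_cast
    ring
  | inf y => simp [cons, length]

lemma edge?_cons_zero (e : Γ.E) (x : Γ.BPath) (h : x.src = Γ.r e) :
    (x.cons e h).edge? 0 = some e := by
  cases x <;> simp [BPath.cons, BPath.edge?]

lemma edge?_cons_succ (e : Γ.E) (x : Γ.BPath) (h : x.src = Γ.r e) (n : ℕ) :
    (x.cons e h).edge? (n + 1) = x.edge? n := by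
  cases x <;> simp [BPath.cons, BPath.edge?]

lemma foldr_consE_spec {Δ : DirGraph} {v w : Δ.V} {l : List Δ.E}
    (hp : Δ.IsPathList v l w) : ∀ y : Δ.BPath, y.src = w →
    (l.foldr consE y).src = v ∧
    (l.foldr consE y).length = (l.length : ℕ∞) + y.length ∧
    ∀ n, (l.foldr consE y).edge? n =
      if n < l.length then l[n]? else y.edge? (n - l.length) := by
  induction hp with
  | nil v =>
    intro y hy
    exact ⟨hy, by simp, fun n => by simp⟩
  | @cons v' w' e l hv h ih =>
    intro y hy
    obtain ⟨hs, hl, he⟩ := ih y hy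
    have hfold : (e :: l).foldr consE y = (l.foldr consE y).cons e hs := dif_pos hs
    refine ⟨?_, ?_, ?_⟩
    · rw [hfold, src_cons]; exact hv
    · rw [hfold, length_cons, hl]
      simp only [List.length_cons]
      push_cast
      ring
    · intro n
      rw [hfold]
      cases n with
      | zero => simp [edge?_cons_zero]
      | succ n =>
        rw [edge?_cons_succ, he n]
        simp only [List.length_cons, Nat.succ_lt_succ_iff, List.getElem?_cons_succ,
          Nat.succ_sub_succ]

lemma src_toStab (x : Γ.BPath) : x.toStab.src = Sum.inl x.src := by
  cases x <;> rfl

lemma length_toStab (x : Γ.BPath) : x.toStab.length = x.length := by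
  cases x with
  | fin p hb => simp [toStab, FinPath.toStab, length]; exact List.length_map ..
  | inf y => rfl

lemma edge?_toStab (x : Γ.BPath) (n : ℕ) :
    x.toStab.edge? n = (x.edge? n).map Sum.inl := by
  cases x with
  | fin p hb => simp [toStab, FinPath.toStab, edge?]; exact List.getElem?_map ..
  | inf y => rfl

end BPath

lemma pathList_rng_unique {v w w' : Γ.V} {l : List Γ.E}
    (h : Γ.IsPathList v l w) (h' : Γ.IsPathList v l w') : w = w' := by
  induction l generalizing v with
  | nil => cases h; cases h'; rfl
  | cons e l ih =>
    cases h with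
    | cons _ hv hrest =>
      cases h' with
      | cons _ hv' hrest' => exact ih hrest hrest'

lemma bpath_ext {x y : Γ.BPath} (hs : x.src = y.src) (hl : x.length = y.length)
    (he : ∀ n, x.edge? n = y.edge? n) : x = y := by
  cases x with
  | fin p hb =>
    cases y with
    | fin q hb' =>
      obtain ⟨ps, pe, pr, pp⟩ := p
      obtain ⟨qs, qe, qr, qp⟩ := q
      have hsrc : ps = qs := hs
      have hedges : pe = qe := List.ext_getElem? fun n => he n
      subst hsrc hedges
      have hrng : pr = qr := pathList_rng_unique pp qp
      subst hrng
      rfl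
    | inf z => exact absurd hl (by simp [BPath.length])
  | inf z =>
    cases y with
    | fin q hb' => exact absurd hl (by simp [BPath.length])
    | inf z' =>
      obtain ⟨ze, zc⟩ := z
      obtain ⟨ze', zc'⟩ := z'
      have : ze = ze' := by
        funext n
        have := he n
        simpa [BPath.edge?] using this
      subst this
      rfl

lemma isPathList_append {v w u : Γ.V} {l l' : List Γ.E}
    (h : Γ.IsPathList v l w) (h' : Γ.IsPathList w l' u) : Γ.IsPathList v (l ++ l') u := by
  induction h with
  | nil => exact h'
  | cons e hv hrest ih => exact .cons e hv (ih h')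

lemma headEdges_length (v : Γ.V) (i : ℕ) : (headEdges Γ v i).length = i := by
  induction i with
  | zero => rfl
  | succ k ih => simp [headEdges, ih]; exact congrArg (· + 1) ih

lemma headEdges_getElem? (v : Γ.V) : ∀ i n, n < i →
    (headEdges Γ v i)[n]? = some (Sum.inr (v, i - 1 - n)) := by
  intro i
  induction i with
  | zero => omega
  | succ k ih =>
    intro n hn
    cases n with
    | zero => rfl
    | succ m =>
      have h2 : k + 1 - 1 - (m + 1) = k - 1 - m := by omega
      rw [h2]
      exact ih m (by omega)

lemma headSrcV_inj {v v' : Γ.V} {i i' : ℕ}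
    (h : headSrcV Γ v i = headSrcV Γ v' i') : v = v' ∧ i = i' := by
  cases i with
  | zero =>
    cases i' with
    | zero => exact ⟨Sum.inl_injective h, rfl⟩
    | succ k => exact absurd h (by simp [headSrcV])
  | succ k =>
    cases i' with
    | zero => exact absurd h (by simp [headSrcV])
    | succ k' =>
      have hp := Sum.inr_injective h
      have h1 : v = v' := congrArg Prod.fst hp
      have h2 : k = k' := congrArg Prod.snd hp
      exact ⟨h1, by omega⟩

lemma stab_r_headSrcV (v : Γ.V) (j : ℕ) :
    Γ.stab.r (Sum.inr (v, j)) = headSrcV Γ v j := by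
  cases j <;> rfl

lemma stab_path_from_inl {v : Γ.V} {l : List Γ.stab.E} {w : Γ.stab.V}
    (h : Γ.stab.IsPathList (Sum.inl v) l w) :
    ∃ (l' : List Γ.E) (w' : Γ.V), w = Sum.inl w' ∧ l = l'.map Sum.inl ∧
      Γ.IsPathList v l' w' := by
  induction l generalizing v with
  | nil => rcases h with _ | _; exact ⟨[], v, rfl, rfl, .nil v⟩
  | cons e l ih =>
    match h with
    | .cons _ hv hrest =>
      cases e with
      | inl e0 =>
        have hv0 : Γ.s e0 = v := Sum.inl_injective hv
        obtain ⟨l', w', hw, hl, hp⟩ := ih hrest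
        exact ⟨e0 :: l', w', hw, by simp [hl]; rfl, .cons e0 hv0 hp⟩
      | inr p => exact absurd hv (by simp [stab])

lemma stab_path_to_inl {v0 : Γ.stab.V} {l : List Γ.stab.E} {w : Γ.V}
    (h : Γ.stab.IsPathList v0 l (Sum.inl w)) :
    ∃ (i : ℕ) (v : Γ.V) (l' : List Γ.E), v0 = headSrcV Γ v i ∧
      l = headEdges Γ v i ++ (l'.map Sum.inl : List Γ.stab.E) ∧ Γ.IsPathList v l' w := by
  induction l generalizing v0 with
  | nil =>
    cases h
    exact ⟨0, w, [], rfl, rfl, .nil w⟩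
  | cons e l ih =>
    cases h with
    | cons _ hv hrest =>
      cases e with
      | inl e0 =>
        have hv0 : v0 = Sum.inl (Γ.s e0) := hv.symm
        subst hv0
        obtain ⟨l', w', hw, hl, hp⟩ :=
          stab_path_from_inl (v := Γ.s e0)
            (.cons (Sum.inl e0) (rfl : Γ.stab.s (Sum.inl e0) = Sum.inl (Γ.s e0)) hrest)
        obtain rfl : w = w' := Sum.inl_injective hw
        exact ⟨0, Γ.s e0, l', rfl, by rw [hl]; rfl, hp⟩
      | inr p =>
        obtain ⟨v2, j⟩ := p
        have hv0 : v0 = Sum.inr (v2, j) := hv.symm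
        rw [stab_r_headSrcV] at hrest
        obtain ⟨i', v', l', hsrc, hl, hp⟩ := ih hrest
        obtain ⟨hveq, hjeq⟩ := headSrcV_inj hsrc
        refine ⟨j + 1, v', l', ?_, ?_, hp⟩
        · rw [hv0, hveq]
          rfl
        · show Sum.inr (v2, j) :: l = headEdges Γ v' (j + 1) ++ (l'.map Sum.inl : List Γ.stab.E)
          rw [hl, hveq, hjeq]
          rfl

lemma stab_path_to_inr {v0 : Γ.stab.V} {l : List Γ.stab.E} {v : Γ.V} {k : ℕ}
    (h : Γ.stab.IsPathList v0 l (Sum.inr (v, k))) :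
    v0 = headSrcV Γ v (k + 1 + l.length) ∧
      l ++ headEdges Γ v (k + 1) = headEdges Γ v (k + 1 + l.length) := by
  induction l generalizing v0 with
  | nil =>
    cases h
    exact ⟨rfl, by simp⟩
  | cons e l ih =>
    cases h with
    | cons _ hv hrest =>
      cases e with
      | inl e0 =>
        obtain ⟨l', w', hw, _, _⟩ := stab_path_from_inl hrest
        exact absurd hw (by simp)
      | inr p =>
        obtain ⟨v2, j⟩ := p
        have hv0 : v0 = Sum.inr (v2, j) := hv.symm
        rw [stab_r_headSrcV] at hrest
        obtain ⟨hsrc, hl⟩ := ih hrest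
        obtain ⟨hveq, hjeq⟩ := headSrcV_inj hsrc
        have hlen : k + 1 + (l.length + 1) = (k + 1 + l.length) + 1 := by omega
        constructor
        · rw [hv0, hveq, hjeq]
          show Sum.inr (v, k + 1 + l.length) = headSrcV Γ v (k + 1 + (l.length + 1))
          rw [hlen]
          rfl
        · show Sum.inr (v2, j) :: (l ++ headEdges Γ v (k + 1)) =
            headEdges Γ v (k + 1 + (l.length + 1))
          rw [hl, hveq, hjeq, hlen]
          rfl

lemma boundary_of_stab {w : Γ.stab.V} (h : Γ.stab.IsBoundaryVertex w) :
    ∃ w0 : Γ.V, w = Sum.inl w0 ∧ Γ.IsBoundaryVertex w0 := by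
  cases w with
  | inl w0 =>
    refine ⟨w0, rfl, ?_⟩
    cases h with
    | inl hsink =>
      left
      intro e he
      exact hsink (Sum.inl e) (by simp [he]; rfl)
    | inr hie =>
      right
      have hsub : {e' : Γ.stab.E | Γ.stab.s e' = Sum.inl w0} ⊆
          Sum.inl '' {e : Γ.E | Γ.s e = w0} := by
        rintro e' he'
        cases e' with
        | inl e => exact ⟨e, Sum.inl_injective he', rfl⟩
        | inr p => exact absurd he' (fun h => Sum.inr_ne_inl h)
      have : (Sum.inl '' {e : Γ.E | Γ.s e = w0}).Infinite := hie.mono hsub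
      exact Set.Infinite.of_image _ this
  | inr p =>
    obtain ⟨v, j⟩ := p
    exfalso
    cases h with
    | inl hsink => exact hsink (Sum.inr (v, j)) rfl
    | inr hie =>
      have hsub : {e' : Γ.stab.E | Γ.stab.s e' = Sum.inr (v, j)} ⊆ {Sum.inr (v, j)} := by
        rintro e' he'
        cases e' with
        | inl e => exact absurd he' (fun h => Sum.inl_ne_inr h)
        | inr q =>
          have : q = (v, j) := Sum.inr_injective he'
          simp [this]
          exact Set.mem_singleton _
      exact hie (Set.Finite.subset (Set.finite_singleton _) hsub)
/-- The map `(x, i) ↦ μ_{i,s(x)} x`. -/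
noncomputable def stabMap (Γ : DirGraph) (q : Γ.BPath × ℕ) : Γ.stab.BPath :=
  BPath.concat (headPath Γ q.1.src q.2) q.1.toStab

lemma stabMap_spec (x : Γ.BPath) (i : ℕ) :
    (stabMap Γ (x, i)).src = headSrcV Γ x.src i ∧
    (stabMap Γ (x, i)).length = (i : ℕ∞) + x.length ∧
    ∀ n, (stabMap Γ (x, i)).edge? n =
      if n < i then (headEdges Γ x.src i)[n]?
      else (x.edge? (n - i)).map Sum.inl := by
  have hys : x.toStab.src = Sum.inl x.src := BPath.src_toStab x
  have h := BPath.foldr_consE_spec (headIsPath Γ x.src i) x.toStab hys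
  have hconcat : stabMap Γ (x, i) = (headEdges Γ x.src i).foldr BPath.consE x.toStab := rfl
  rw [hconcat]
  refine ⟨h.1, ?_, ?_⟩
  · rw [h.2.1, headEdges_length, BPath.length_toStab]
  · intro n
    rw [h.2.2 n, headEdges_length, BPath.edge?_toStab]
    rfl

lemma stabMap_surjective : Function.Surjective (stabMap Γ) := by
  intro y
  cases y with
  | fin p hb =>
    obtain ⟨v0, l, w0, hp⟩ := p
    obtain ⟨w, rfl, hbw⟩ := boundary_of_stab hb
    obtain ⟨i, v, l', hsrc, hl, hpath⟩ := stab_path_to_inl hp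
    refine ⟨(BPath.fin ⟨v, l', w, hpath⟩ hbw, i), ?_⟩
    obtain ⟨hS, hL, hE⟩ := stabMap_spec (BPath.fin ⟨v, l', w, hpath⟩ hbw : Γ.BPath) i
    apply bpath_ext
    · rw [hS]; exact hsrc.symm
    · rw [hL]
      show (i : ℕ∞) + ((l'.length : ℕ) : ℕ∞) = ((l.length : ℕ) : ℕ∞)
      rw [hl]
      simp [headEdges_length]
      exact (List.length_map ..).symm
    · intro n
      rw [hE n]
      show _ = l[n]?
      by_cases hn : n < i
      · rw [if_pos hn]
        show (headEdges Γ v i)[n]? = l[n]?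
        rw [hl, List.getElem?_append_left (by rw [headEdges_length]; exact hn)]
      · rw [if_neg hn]
        show ((l'[n - i]? : Option Γ.E)).map Sum.inl = l[n]?
        rw [hl, List.getElem?_append_right (by rw [headEdges_length]; omega),
          headEdges_length]
        exact (List.getElem?_map ..).symm
  | inf z =>
    -- first show the edges of z eventually become `inl`, after an initial head segment
    have step_inl : ∀ n e, z.edges n = Sum.inl e → ∃ e', z.edges (n + 1) = Sum.inl e' := by
      intro n e he
      have hc := z.compat n
      rw [he] at hc
      cases he' : z.edges (n + 1) with
      | inl e' => exact ⟨e', rfl⟩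
      | inr p =>
        rw [he'] at hc
        exact absurd hc (by simp [stab])
    have step_inr : ∀ n v j, z.edges n = Sum.inr (v, j + 1) →
        z.edges (n + 1) = Sum.inr (v, j) := by
      intro n v j he
      have hc := z.compat n
      rw [he] at hc
      cases he' : z.edges (n + 1) with
      | inl e' =>
        rw [he'] at hc
        exact absurd hc (by simp [stab])
      | inr p =>
        rw [he'] at hc
        have : (v, j) = p := by simpa [stab] using hc
        rw [← this]
    have step_inr0 : ∀ n v, z.edges n = Sum.inr (v, 0) →
        ∃ e', z.edges (n + 1) = Sum.inl e' ∧ Γ.s e' = v := by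
      intro n v he
      have hc := z.compat n
      rw [he] at hc
      cases he' : z.edges (n + 1) with
      | inl e' =>
        rw [he'] at hc
        exact ⟨e', rfl, (Sum.inl_injective (α := Γ.V) hc.symm)⟩
      | inr p =>
        rw [he'] at hc
        exact absurd hc (by simp [stab])
    cases he0 : z.edges 0 with
    | inl e0 =>
      -- all edges are inl
      have hall : ∀ n, ∃ e, z.edges n = Sum.inl e := by
        intro n
        induction n with
        | zero => exact ⟨e0, he0⟩
        | succ k ih =>
          obtain ⟨e, he⟩ := ih
          exact step_inl k e he
      choose w hw using hall
      have hcompat : ∀ n, Γ.r (w n) = Γ.s (w (n + 1)) := by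
        intro n
        have hc := z.compat n
        rw [hw n, hw (n + 1)] at hc
        exact Sum.inl_injective hc
      refine ⟨(BPath.inf ⟨w, hcompat⟩, 0), ?_⟩
      obtain ⟨hS, hL, hE⟩ := stabMap_spec (BPath.inf ⟨w, hcompat⟩ : Γ.BPath) 0
      apply bpath_ext
      · rw [hS]
        show Sum.inl (Γ.s (w 0)) = Γ.stab.s (z.edges 0)
        rw [hw 0]
        rfl
      · rw [hL]
        show ((0 : ℕ) : ℕ∞) + ⊤ = ⊤
        simp
      · intro n
        rw [hE n, if_neg (by omega)]
        show (some (Sum.inl (w (n - 0))) : Option Γ.stab.E) = some (z.edges n)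
        rw [hw n]
        rfl
    | inr p =>
      obtain ⟨v, j⟩ := p
      -- the first j+1 edges form the head, then inl forever
      have hdown : ∀ m, m ≤ j → z.edges m = Sum.inr (v, j - m) := by
        intro m
        induction m with
        | zero => intro _; simpa using he0
        | succ k ih =>
          intro hk
          have hzk := ih (by omega)
          have : j - k = (j - (k + 1)) + 1 := by omega
          rw [this] at hzk
          exact step_inr k v _ hzk
      obtain ⟨e1, he1, hse1⟩ := step_inr0 j v (by simpa using hdown j le_rfl)
      have hall : ∀ n, ∃ e, z.edges (j + 1 + n) = Sum.inl e := by
        intro n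
        induction n with
        | zero => exact ⟨e1, he1⟩
        | succ k ih =>
          obtain ⟨e, he⟩ := ih
          exact step_inl _ e he
      choose w hw using hall
      have hcompat : ∀ n, Γ.r (w n) = Γ.s (w (n + 1)) := by
        intro n
        have hc := z.compat (j + 1 + n)
        rw [hw n, show j + 1 + n + 1 = j + 1 + (n + 1) by omega, hw (n + 1)] at hc
        exact Sum.inl_injective hc
      have hw0 : Γ.s (w 0) = v := by
        have h0 := hw 0
        rw [Nat.add_zero] at h0
        rw [h0] at he1
        obtain rfl : w 0 = e1 := Sum.inl_injective he1
        exact hse1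
      have hsrcx : (BPath.inf ⟨w, hcompat⟩ : Γ.BPath).src = v := hw0
      refine ⟨(BPath.inf ⟨w, hcompat⟩, j + 1), ?_⟩
      obtain ⟨hS, hL, hE⟩ := stabMap_spec (BPath.inf ⟨w, hcompat⟩ : Γ.BPath) (j + 1)
      apply bpath_ext
      · rw [hS, hsrcx]
        show Γ.headSrcV v (j + 1) = Γ.stab.s (z.edges 0)
        rw [he0]
        rfl
      · rw [hL]
        show ((j + 1 : ℕ) : ℕ∞) + ⊤ = ⊤
        simp
      · intro n
        rw [hE n]
        show _ = some (z.edges n)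
        by_cases hn : n < j + 1
        · have hn' : j + 1 - 1 - n = j - n := by omega
          rw [if_pos hn, hsrcx, headEdges_getElem? _ _ _ hn, hn', hdown n (by omega)]
          rfl
        · rw [if_neg hn]
          show (some (Sum.inl (w (n - (j + 1)))) : Option Γ.stab.E) = some (z.edges n)
          rw [← hw (n - (j + 1)), show j + 1 + (n - (j + 1)) = n from by omega]

lemma stabMap_injective : Function.Injective (stabMap Γ) := by
  rintro ⟨x, i⟩ ⟨x', i'⟩ h
  obtain ⟨hS, hL, hE⟩ := stabMap_spec x i
  obtain ⟨hS', hL', hE'⟩ := stabMap_spec x' i'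
  rw [h] at hS hL hE
  have hsrc := hS.symm.trans hS'
  obtain ⟨hv, hi⟩ := headSrcV_inj hsrc
  subst hi
  have hlen : x.length = x'.length := by
    have h2 := hL.symm.trans hL'
    exact WithTop.add_left_cancel (ENat.coe_ne_top i) h2
  have hedge : ∀ n, x.edge? n = x'.edge? n := by
    intro n
    have h2 := (hE (n + i)).symm.trans (hE' (n + i))
    rw [if_neg (by omega), if_neg (by omega)] at h2
    simp only [Nat.add_sub_cancel] at h2
    exact Option.map_injective Sum.inl_injective h2
  have hxx : x = x' := bpath_ext hv hlen hedge
  rw [hxx]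

lemma stabMap_bijective : Function.Bijective (stabMap Γ) :=
  ⟨stabMap_injective, stabMap_surjective⟩

/-- The inclusion of old edges into the stabilised graph, as an embedding. -/
def inlEmb (Γ : DirGraph) : Γ.E ↪ Γ.stab.E := ⟨Sum.inl, Sum.inl_injective⟩

/-- The basic path `μ_{i,s(μ)} μ` in `SE`. -/
def bigPath (Γ : DirGraph) (μ : Γ.FinPath) (i : ℕ) : Γ.stab.FinPath :=
  ⟨headSrcV Γ μ.src i, headEdges Γ μ.src i ++ (μ.edges.map Sum.inl : List Γ.stab.E),
    Sum.inl μ.rng,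
    isPathList_append (headIsPath Γ μ.src i) (isPathList_map_inl μ.isPath)⟩

lemma mem_bigCyl_iff (μ : Γ.FinPath) (F : Finset Γ.E) (i : ℕ) (q : Γ.BPath × ℕ) :
    stabMap Γ q ∈ BPath.cyl (bigPath Γ μ i) (F.map (inlEmb Γ)) ↔
      q.1 ∈ BPath.cyl μ F ∧ q.2 = i := by
  obtain ⟨x, j⟩ := q
  show _ ↔ x ∈ BPath.cyl μ F ∧ j = i
  obtain ⟨hS, hL, hE⟩ := stabMap_spec x j
  have hBlen : (bigPath Γ μ i).edges.length = i + μ.edges.length := by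
    simp [bigPath, headEdges_length]
    exact List.length_map ..
  constructor
  · rintro ⟨⟨hsrc, hedges⟩, hforb⟩
    rw [hS] at hsrc
    obtain ⟨hv, hj⟩ := headSrcV_inj hsrc
    subst hj
    refine ⟨⟨⟨hv, ?_⟩, ?_⟩, rfl⟩
    · intro n hn
      have h1 := hedges (j + n) (by omega)
      rw [hE (j + n), if_neg (by omega)] at h1
      simp only [Nat.add_sub_cancel_left] at h1
      have h2 : (bigPath Γ μ j).edges[j + n]? = (μ.edges[n]?).map Sum.inl := by
        show (headEdges Γ μ.src j ++ (μ.edges.map Sum.inl : List Γ.stab.E))[j + n]? = _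
        rw [List.getElem?_append_right (by rw [headEdges_length]; omega), headEdges_length,
          Nat.add_sub_cancel_left]
        exact List.getElem?_map ..
      rw [h2] at h1
      exact Option.map_injective Sum.inl_injective h1
    · intro e he
      have h1 := hforb (Sum.inl e) (Finset.mem_map_of_mem (inlEmb Γ) he)
      rw [hBlen, hE (j + μ.edges.length), if_neg (by omega)] at h1
      simp only [Nat.add_sub_cancel_left] at h1
      intro hcon
      exact h1 (by rw [hcon]; rfl)
  · rintro ⟨⟨⟨hsrc, hedges⟩, hforb⟩, rfl⟩
    refine ⟨⟨?_, ?_⟩, ?_⟩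
    · rw [hS, hsrc]; rfl
    · intro n hn
      rw [hBlen] at hn
      rw [hE n]
      by_cases hni : n < j
      · rw [if_pos hni]
        show _ = (headEdges Γ μ.src j ++ (μ.edges.map Sum.inl : List Γ.stab.E))[n]?
        rw [List.getElem?_append_left (by rw [headEdges_length]; exact hni), hsrc]
      · rw [if_neg hni]
        show _ = (headEdges Γ μ.src j ++ (μ.edges.map Sum.inl : List Γ.stab.E))[n]?
        rw [List.getElem?_append_right (by rw [headEdges_length]; omega), headEdges_length,
          hedges (n - j) (by omega)]
        exact (List.getElem?_map ..).symm
    · intro e' he'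
      obtain ⟨e, he, rfl⟩ := Finset.mem_map.mp he'
      rw [hBlen, hE (j + μ.edges.length), if_neg (by omega)]
      simp only [Nat.add_sub_cancel_left]
      intro hcon
      apply hforb e he
      cases hx : x.edge? μ.edges.length with
      | none => rw [hx] at hcon; exact absurd hcon (fun h => by cases h)
      | some e'' =>
        rw [hx] at hcon
        simp only [Option.map_some, Option.some.injEq, inlEmb,
          Function.Embedding.coeFn_mk] at hcon
        exact congrArg some (Sum.inl_injective (Option.some.inj hcon))

lemma mem_headCyl_iff (v : Γ.V) (i : ℕ) (q : Γ.BPath × ℕ) :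
    stabMap Γ q ∈ BPath.cyl (headPath Γ v i) ∅ ↔ q.1.src = v ∧ q.2 = i := by
  obtain ⟨x, j⟩ := q
  show _ ↔ x.src = v ∧ j = i
  obtain ⟨hS, hL, hE⟩ := stabMap_spec x j
  constructor
  · rintro ⟨⟨hsrc, _⟩, _⟩
    rw [hS] at hsrc
    obtain ⟨hv, hj⟩ := headSrcV_inj hsrc
    exact ⟨hv, hj⟩
  · rintro ⟨hsrc, rfl⟩
    refine ⟨⟨?_, ?_⟩, ?_⟩
    · rw [hS, hsrc]; rfl
    · intro n hn
      have hn' : n < j := by simpa [headPath, headEdges_length] using hn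
      rw [hE n, if_pos hn', hsrc]
      rfl
    · intro e he
      exact absurd he (Finset.notMem_empty e)

lemma isOpen_cyl_of {μ : Γ.FinPath} {F : Finset Γ.E} (hF : ∀ e ∈ F, Γ.s e = μ.rng) :
    IsOpen (BPath.cyl μ F) :=
  TopologicalSpace.isOpen_generateFrom_of_mem ⟨μ, F, hF, rfl⟩

lemma isOpen_cyl_of_stab {μ : Γ.stab.FinPath} {F : Finset Γ.stab.E}
    (hF : ∀ e ∈ F, Γ.stab.s e = μ.rng) : IsOpen (BPath.cyl μ F) :=
  TopologicalSpace.isOpen_generateFrom_of_mem ⟨μ, F, hF, rfl⟩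

lemma finPath_source_cond {μ : Γ.FinPath} {F : Finset Γ.E} (hF : ∀ e ∈ F, Γ.s e = μ.rng)
    (i : ℕ) :
    ∀ e ∈ F.map (inlEmb Γ), Γ.stab.s e = (bigPath Γ μ i).rng := by
  intro e' he'
  obtain ⟨e, he, rfl⟩ := Finset.mem_map.mp he'
  show Sum.inl (Γ.s e) = Sum.inl μ.rng
  rw [hF e he]

lemma stabMap_continuous : Continuous (stabMap Γ) := by
  apply continuous_generateFrom_iff.mpr
  rintro U ⟨μ, F, hF, rfl⟩
  obtain ⟨μs, μe, μr, μp⟩ := μ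
  cases μr with
  | inl w =>
    -- decompose μ
    obtain ⟨i, v, l', hsrc, hl, hpath⟩ := stab_path_to_inl μp
    subst hsrc
    subst hl
    set μ₀ : Γ.FinPath := ⟨v, l', w, hpath⟩ with hμ₀
    set F0 : Finset Γ.E := F.preimage Sum.inl Sum.inl_injective.injOn with hF0
    have hFeq : F = F0.map (inlEmb Γ) := by
      ext e
      simp only [Finset.mem_map, hF0, Finset.mem_preimage]
      constructor
      · intro he
        have hse := hF e he
        cases e with
        | inl e0 => exact ⟨e0, Finset.mem_preimage.mpr he, rfl⟩
        | inr p => exact absurd hse (by simp [stab])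
      · rintro ⟨e0, he0, rfl⟩
        exact Finset.mem_preimage.mp he0
    rw [hFeq]
    have hpre : stabMap Γ ⁻¹' BPath.cyl ⟨headSrcV Γ v i,
        headEdges Γ v i ++ (l'.map Sum.inl : List Γ.stab.E), Sum.inl w, μp⟩
          (F0.map (inlEmb Γ)) =
        BPath.cyl μ₀ F0 ×ˢ ({i} : Set ℕ) := by
      ext q
      rw [Set.mem_preimage]
      simp only [Set.mem_prod, Set.mem_singleton_iff]
      exact mem_bigCyl_iff μ₀ F0 i q
    rw [hpre]
    apply IsOpen.prod
    · apply isOpen_cyl_of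
      intro e he
      have h2 := hF (Sum.inl e) (Finset.mem_preimage.mp he)
      exact Sum.inl_injective h2
    · exact isOpen_discrete _
  | inr p =>
    obtain ⟨v, k⟩ := p
    obtain ⟨hsrc, hl⟩ := stab_path_to_inr μp
    rcases Finset.eq_empty_or_nonempty F with rfl | ⟨e, he⟩
    · -- F empty : preimage is {x | x.src = v} × {k+1+m}
      have hpre : stabMap Γ ⁻¹' BPath.cyl ⟨μs, μe, Sum.inr (v, k), μp⟩ ∅ =
          BPath.cyl (FinPath.ofVertex Γ v) ∅ ×ˢ ({k + 1 + μe.length} : Set ℕ) := by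
        ext ⟨x, j⟩
        obtain ⟨hS, hL, hE⟩ := stabMap_spec x j
        simp only [Set.mem_preimage, Set.mem_prod, Set.mem_singleton_iff]
        constructor
        · rintro ⟨⟨hsrc', hedges⟩, _⟩
          rw [hS] at hsrc'
          have hsrc'' := hsrc'.trans hsrc
          obtain ⟨hv, hj⟩ := headSrcV_inj hsrc''
          exact ⟨⟨⟨hv, fun n hn => absurd hn (by simp [FinPath.ofVertex])⟩, fun e' he' =>
            absurd he' (Finset.notMem_empty e')⟩, hj⟩
        · rintro ⟨⟨⟨hxv, _⟩, _⟩, hj⟩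
          subst hj
          refine ⟨⟨?_, ?_⟩, fun e' he' => absurd he' (Finset.notMem_empty e')⟩
          · rw [hS, hxv]
            exact hsrc.symm
          · intro n hn
            have hn2 : n < μe.length := hn
            show (stabMap Γ (x, k + 1 + μe.length)).edge? n = μe[n]?
            rw [hE n, if_pos (by omega), hxv]
            have h1 : μe[n]? = (μe ++ headEdges Γ v (k + 1))[n]? :=
              (List.getElem?_append_left hn2).symm
            rw [h1, hl]
            rfl
      rw [hpre]
      exact IsOpen.prod (isOpen_cyl_of (fun e he => absurd he (Finset.notMem_empty e)))
        (isOpen_discrete _)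
    · -- F nonempty : e must be the unique edge out of (v,k), and the cylinder has
      -- empty preimage
      have heq : e = Sum.inr (v, k) := by
        have hse := hF e he
        cases e with
        | inl e0 => exact absurd hse (by simp [stab])
        | inr q =>
          have : q = (v, k) := by simpa [stab] using hse
          rw [this]
      have hpre : stabMap Γ ⁻¹' BPath.cyl ⟨μs, μe, Sum.inr (v, k), μp⟩ F = ∅ := by
        ext ⟨x, j⟩
        simp only [Set.mem_preimage, Set.mem_empty_iff_false, iff_false]
        rintro ⟨⟨hsrc', hedges⟩, hforb⟩
        obtain ⟨hS, hL, hE⟩ := stabMap_spec x j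
        rw [hS] at hsrc'
        have hsrc'' := hsrc'.trans hsrc
        obtain ⟨hv, hj⟩ := headSrcV_inj hsrc''
        apply hforb e he
        rw [heq, hE μe.length, if_pos (by omega), hv, hj,
          headEdges_getElem? _ _ _ (by omega)]
        have : k + 1 + μe.length - 1 - μe.length = k := by omega
        rw [this]
        rfl
      rw [hpre]
      exact isOpen_empty
end Aux

end DirGraph

open DirGraph in
/-- For a directed graph `E`, the map `(x, i) ↦ μ_{i,s(x)} x` is a bijection and a
homeomorphism from `∂E × ℕ` onto `∂(SE)`; equivalently, `∂(SE) = {μ_{i,s(x)}x : x ∈ ∂E, i ∈ ℕ}`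
with unique representations, and `μ_{i,s(x)}x ↦ (x, i)` is a homeomorphism `∂(SE) ≅ ∂E × ℕ`. -/
theorem stab_boundary_path_space_homeomorph (Γ : DirGraph.{u}) :
    Function.Bijective (fun q : Γ.BPath × ℕ =>
      DirGraph.BPath.concat (headPath Γ q.1.src q.2) q.1.toStab) ∧
    IsHomeomorph (fun q : Γ.BPath × ℕ =>
      DirGraph.BPath.concat (headPath Γ q.1.src q.2) q.1.toStab) := by
  have hbij : Function.Bijective (stabMap Γ) := stabMap_bijective
  have hcont : Continuous (stabMap Γ) := stabMap_continuous
  let e : Γ.BPath × ℕ ≃ Γ.stab.BPath := Equiv.ofBijective _ hbij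
  have happ : ∀ y, stabMap Γ (e.symm y) = y := fun y => e.apply_symm_apply y
  have h1 : Continuous fun y : Γ.stab.BPath => (e.symm y).1 := by
    apply continuous_generateFrom_iff.mpr
    rintro U ⟨μ, F, hF, rfl⟩
    have hpre : (fun y : Γ.stab.BPath => (e.symm y).1) ⁻¹' DirGraph.BPath.cyl μ F =
        ⋃ i, DirGraph.BPath.cyl (bigPath Γ μ i) (F.map (inlEmb Γ)) := by
      ext y
      simp only [Set.mem_preimage, Set.mem_iUnion]
      constructor
      · intro hy
        refine ⟨(e.symm y).2, ?_⟩
        have := (mem_bigCyl_iff μ F (e.symm y).2 (e.symm y)).mpr ⟨hy, rfl⟩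
        rwa [happ y] at this
      · rintro ⟨i, hi⟩
        rw [← happ y] at hi
        exact ((mem_bigCyl_iff μ F i (e.symm y)).mp hi).1
    rw [hpre]
    exact isOpen_iUnion fun i => isOpen_cyl_of_stab (finPath_source_cond hF i)
  have h2 : Continuous fun y : Γ.stab.BPath => (e.symm y).2 := by
    apply continuous_discrete_rng.mpr
    intro i
    have hpre : (fun y : Γ.stab.BPath => (e.symm y).2) ⁻¹' {i} =
        ⋃ v, DirGraph.BPath.cyl (headPath Γ v i) ∅ := by
      ext y
      simp only [Set.mem_preimage, Set.mem_singleton_iff, Set.mem_iUnion]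
      constructor
      · intro hy
        refine ⟨(e.symm y).1.src, ?_⟩
        have := (mem_headCyl_iff (e.symm y).1.src i (e.symm y)).mpr ⟨rfl, hy⟩
        rwa [happ y] at this
      · rintro ⟨v, hv⟩
        rw [← happ y] at hv
        exact ((mem_headCyl_iff v i (e.symm y)).mp hv).2
    rw [hpre]
    exact isOpen_iUnion fun v =>
      isOpen_cyl_of_stab (fun e' he' => absurd he' (Finset.notMem_empty e'))
  have hsymm : Continuous (e.symm : Γ.stab.BPath → Γ.BPath × ℕ) := h1.prodMk h2
  have H : IsHomeomorph (stabMap Γ) := (Homeomorph.mk e hcont hsymm).isHomeomorph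
  exact ⟨hbij, H⟩
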